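/- For every real k with 4 < k < 2(1+√5), the half-Mahler measure m⁻(P̃_k) satisfies m⁻(P̃_k) = (1/π) ∫_{k/(2√(k+4))}^{1} log( B̃(t) + √(B̃(t)² + 1) ) · dt/√(1−t²), where B̃(t) = (2t√(k+4) − k)/(2√(k−4)). -/

import Mathlib

open Real MeasureTheory Filter

/-- Complete elliptic integral of the first kind. -/
noncomputable def ellK (z : ℝ) : ℝ :=
  ∫ x in (0:ℝ)..1, 1 / Real.sqrt ((1 - x ^ 2) * (1 - z ^ 2 * x ^ 2))

/-- Complete elliptic integral of the third kind. -/
noncomputable def ellPi (n z : ℝ) : ℝ :=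
  ∫ x in (0:ℝ)..1, 1 / ((1 - n * x ^ 2) * Real.sqrt ((1 - x ^ 2) * (1 - z ^ 2 * x ^ 2)))

/-- Mahler measure of `P_{1,k}(x,y) = x + 1/x + y + 1/y + k`. -/
noncomputable def mahlerP1 (k : ℝ) : ℝ :=
  ∫ θ in (0:ℝ)..1, ∫ φ in (0:ℝ)..1,
    Real.log (Norm.norm (E := ℂ)
      (Complex.exp (2 * Real.pi * Complex.I * θ) +
        (Complex.exp (2 * Real.pi * Complex.I * θ))⁻¹ +
       Complex.exp (2 * Real.pi * Complex.I * φ) +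
        (Complex.exp (2 * Real.pi * Complex.I * φ))⁻¹ + (k : ℂ)))

/-- Mahler measure of `P̃_k(x,y) = √((k+4)/(k−4))·(x + 1/x) + y − 1/y − k/√(k−4)`. -/
noncomputable def mahlerPt (k : ℝ) : ℝ :=
  ∫ θ in (0:ℝ)..1, ∫ φ in (0:ℝ)..1,
    Real.log (Norm.norm (E := ℂ)
      ((Real.sqrt ((k + 4) / (k - 4)) : ℂ) *
        (Complex.exp (2 * Real.pi * Complex.I * θ) +
          (Complex.exp (2 * Real.pi * Complex.I * θ))⁻¹) +
       Complex.exp (2 * Real.pi * Complex.I * φ) -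
        (Complex.exp (2 * Real.pi * Complex.I * φ))⁻¹ -
       ((k / Real.sqrt (k - 4) : ℝ) : ℂ)))

/-- `B_k(e^{2πiθ}) = √((k+4)/(k−4))·2cos(2πθ) − k/√(k−4)`, real on the unit circle. -/
noncomputable def Bt (k θ : ℝ) : ℝ :=
  Real.sqrt ((k + 4) / (k - 4)) * (2 * Real.cos (2 * Real.pi * θ)) - k / Real.sqrt (k - 4)

/-- `y₊(e^{2πiθ}) = (−B + √(B² + 4))/2`. -/
noncomputable def yPlus (k θ : ℝ) : ℝ := (-Bt k θ + Real.sqrt ((Bt k θ) ^ 2 + 4)) / 2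

/-- `y₋(e^{2πiθ}) = (−B − √(B² + 4))/2`. -/
noncomputable def yMinus (k θ : ℝ) : ℝ := (-Bt k θ - Real.sqrt ((Bt k θ) ^ 2 + 4)) / 2

/-- Half-Mahler measure `m⁺(P̃_k) = ∫₀¹ log⁺|y₊(e^{2πiθ})| dθ`. -/
noncomputable def mPlus (k : ℝ) : ℝ := ∫ θ in (0:ℝ)..1, max 0 (Real.log |yPlus k θ|)

/-- Half-Mahler measure `m⁻(P̃_k) = ∫₀¹ log⁺|y₋(e^{2πiθ})| dθ`. -/
noncomputable def mMinus (k : ℝ) : ℝ := ∫ θ in (0:ℝ)..1, max 0 (Real.log |yMinus k θ|)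

noncomputable def mmBf (k t : ℝ) : ℝ :=
  (2 * t * Real.sqrt (k + 4) - k) / (2 * Real.sqrt (k - 4))

lemma mm_log_add_sqrt (x : ℝ) :
    Real.log (x + Real.sqrt (x ^ 2 + 1)) = Real.arsinh x := by
  rw [Real.arsinh, add_comm (x ^ 2) 1]

lemma mm_Bt_eq (k θ : ℝ) (hk : 4 < k) :
    Bt k θ = 2 * mmBf k (Real.cos (2 * Real.pi * θ)) := by
  have hd : (0:ℝ) < Real.sqrt (k - 4) := Real.sqrt_pos.2 (by linarith)
  unfold Bt mmBf
  rw [Real.sqrt_div (by linarith : (0:ℝ) ≤ k + 4)]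
  field_simp

lemma mm_logAbs_yMinus (k θ : ℝ) :
    Real.log |yMinus k θ| = Real.arsinh (Bt k θ / 2) := by
  set B := Bt k θ with hB
  have h1 : |B| < Real.sqrt (B ^ 2 + 4) := by
    rw [← Real.sqrt_sq_eq_abs]
    exact Real.sqrt_lt_sqrt (sq_nonneg _) (by linarith)
  have habs : |yMinus k θ| = (B + Real.sqrt (B ^ 2 + 4)) / 2 := by
    have h2 : 0 < (B + Real.sqrt (B ^ 2 + 4)) / 2 := by
      have := abs_lt.1 h1; linarith [this.1]
    rw [show yMinus k θ = -((B + Real.sqrt (B ^ 2 + 4)) / 2) by unfold yMinus; rw [← hB]; ring,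
      abs_neg, abs_of_pos h2]
  have hsq : Real.sqrt (B ^ 2 + 4) = 2 * Real.sqrt (1 + (B / 2) ^ 2) := by
    rw [show B ^ 2 + 4 = 2 ^ 2 * (1 + (B / 2) ^ 2) by ring,
      Real.sqrt_mul (by positivity), Real.sqrt_sq (by norm_num)]
  rw [habs, Real.arsinh]
  congr 1
  rw [hsq]; ring
set_option maxHeartbeats 2000000 in
/-- For `4 < k < 2(1+√5)`,
`m⁻(P̃_k) = (1/π) ∫_{k/(2√(k+4))}^{1} log(B̃(t) + √(B̃(t)² + 1)) dt/√(1−t²)`,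
where `B̃(t) = (2t√(k+4) − k)/(2√(k−4))`. -/
theorem mMinus_eq_integral (k : ℝ) (hk : 4 < k) (hk' : k < 2 * (1 + Real.sqrt 5)) :
    mMinus k = (1 / Real.pi) *
      ∫ t in (k / (2 * Real.sqrt (k + 4)))..(1:ℝ),
        Real.log ((2 * t * Real.sqrt (k + 4) - k) / (2 * Real.sqrt (k - 4)) +
          Real.sqrt (((2 * t * Real.sqrt (k + 4) - k) / (2 * Real.sqrt (k - 4))) ^ 2 + 1)) /
        Real.sqrt (1 - t ^ 2) := by
  have hpi : (0:ℝ) < π := Real.pi_pos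
  have hk4 : (0:ℝ) < k - 4 := by linarith
  have hk4' : (0:ℝ) < k + 4 := by linarith
  have hcpos : 0 < Real.sqrt (k + 4) := Real.sqrt_pos.2 hk4'
  have hdpos : 0 < Real.sqrt (k - 4) := Real.sqrt_pos.2 hk4
  have ht0pos : 0 < k / (2 * Real.sqrt (k + 4)) := by positivity
  have hklt : k < 2 * Real.sqrt (k + 4) := by
    have h5 : Real.sqrt 5 ^ 2 = 5 := Real.sq_sqrt (by norm_num)
    have hsq : k ^ 2 < 4 * (k + 4) := by nlinarith [Real.sqrt_nonneg 5]
    have h1 : k = Real.sqrt (k ^ 2) := (Real.sqrt_sq (by linarith)).symm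
    have h2 : Real.sqrt (k ^ 2) < Real.sqrt (4 * (k + 4)) :=
      Real.sqrt_lt_sqrt (sq_nonneg k) hsq
    have h3 : Real.sqrt (4 * (k + 4)) = 2 * Real.sqrt (k + 4) := by
      rw [Real.sqrt_mul (by norm_num : (0:ℝ) ≤ 4),
        show (4:ℝ) = 2 ^ 2 by norm_num, Real.sqrt_sq (by norm_num)]
    calc k = Real.sqrt (k ^ 2) := h1
      _ < 2 * Real.sqrt (k + 4) := h3 ▸ h2
  have ht0lt : k / (2 * Real.sqrt (k + 4)) < 1 := (div_lt_one (by positivity)).2 hklt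
  obtain ⟨t0, ht0⟩ : ∃ x : ℝ, x = k / (2 * Real.sqrt (k + 4)) := ⟨_, rfl⟩
  rw [← ht0]
  rw [← ht0] at ht0pos ht0lt
  obtain ⟨α, hα⟩ : ∃ x : ℝ, x = Real.arccos t0 := ⟨_, rfl⟩
  have hα0 : 0 < α := hα ▸ Real.arccos_pos.2 ht0lt
  have hαπ2 : α < π / 2 := hα ▸ Real.arccos_lt_pi_div_two.2 ht0pos
  have hαπ : α ≤ π := hα ▸ Real.arccos_le_pi t0
  have hcosα : Real.cos α = t0 := hα ▸ Real.cos_arccos (by linarith) ht0lt.le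
  obtain ⟨θ0, hθ0⟩ : ∃ x : ℝ, x = α / (2 * π) := ⟨_, rfl⟩
  have hθ0pos : 0 < θ0 := by rw [hθ0]; positivity
  have hθ0lt : θ0 < 1 / 2 := by
    rw [hθ0]
    rw [div_lt_iff₀ (by positivity : (0:ℝ) < 2 * π)]
    nlinarith
  have h2πθ0 : 2 * π * θ0 = α := by rw [hθ0]; field_simp
  -- sign facts about mmBf
  have hBf_nonpos : ∀ t : ℝ, t ≤ t0 → mmBf k t ≤ 0 := by
    intro t ht
    rw [ht0, le_div_iff₀ (by positivity)] at ht
    unfold mmBf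
    apply div_nonpos_of_nonpos_of_nonneg _ (by positivity)
    nlinarith
  have hBf_nonneg : ∀ t : ℝ, t0 ≤ t → 0 ≤ mmBf k t := by
    intro t ht
    rw [ht0, div_le_iff₀ (by positivity)] at ht
    unfold mmBf
    apply div_nonneg _ (by positivity)
    nlinarith
  have hBft0 : mmBf k t0 = 0 :=
    le_antisymm (hBf_nonpos t0 le_rfl) (hBf_nonneg t0 le_rfl)
  -- continuity
  have hcontB : Continuous fun θ : ℝ => mmBf k (Real.cos (2 * π * θ)) := by
    unfold mmBf
    exact (((continuous_const.mul (Real.continuous_cos.comp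
      (continuous_const.mul continuous_id))).mul continuous_const).sub
      continuous_const).div_const _
  have hcontG : Continuous fun θ : ℝ =>
      max 0 (Real.arsinh (mmBf k (Real.cos (2 * π * θ)))) :=
    continuous_const.max (Real.continuous_arsinh.comp hcontB)
  -- Step 1 : mMinus as integral of G
  have step1 : mMinus k =
      ∫ θ in (0:ℝ)..1, max 0 (Real.arsinh (mmBf k (Real.cos (2 * π * θ)))) := by
    unfold mMinus
    apply intervalIntegral.integral_congr
    intro θ _
    simp only [mm_logAbs_yMinus k θ, mm_Bt_eq k θ hk]
    norm_num
  have hint : ∀ a b : ℝ, IntervalIntegrable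
      (fun θ : ℝ => max 0 (Real.arsinh (mmBf k (Real.cos (2 * π * θ)))))
      volume a b := fun a b => hcontG.intervalIntegrable a b
  have split1 : (∫ θ in (0:ℝ)..1, max 0 (Real.arsinh (mmBf k (Real.cos (2 * π * θ))))) =
      (∫ θ in (0:ℝ)..(1/2:ℝ), max 0 (Real.arsinh (mmBf k (Real.cos (2 * π * θ))))) +
      (∫ θ in (1/2:ℝ)..1, max 0 (Real.arsinh (mmBf k (Real.cos (2 * π * θ))))) :=
    (intervalIntegral.integral_add_adjacent_intervals (hint 0 (1/2)) (hint (1/2) 1)).symm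
  have sym1 : (∫ θ in (1/2:ℝ)..1, max 0 (Real.arsinh (mmBf k (Real.cos (2 * π * θ))))) =
      (∫ θ in (0:ℝ)..(1/2:ℝ), max 0 (Real.arsinh (mmBf k (Real.cos (2 * π * θ))))) := by
    have h1 : (∫ θ in (1/2:ℝ)..1, max 0 (Real.arsinh (mmBf k (Real.cos (2 * π * θ))))) =
        ∫ θ in (1/2:ℝ)..1, max 0 (Real.arsinh (mmBf k (Real.cos (2 * π * (1 - θ))))) := by
      apply intervalIntegral.integral_congr
      intro θ _
      simp only
      rw [show 2 * π * (1 - θ) = 2 * π - 2 * π * θ by ring, Real.cos_two_pi_sub]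
    rw [h1, intervalIntegral.integral_comp_sub_left
      (fun θ => max 0 (Real.arsinh (mmBf k (Real.cos (2 * π * θ))))) 1]
    norm_num
  have split2 : (∫ θ in (0:ℝ)..(1/2:ℝ), max 0 (Real.arsinh (mmBf k (Real.cos (2 * π * θ))))) =
      (∫ θ in (0:ℝ)..θ0, max 0 (Real.arsinh (mmBf k (Real.cos (2 * π * θ))))) +
      (∫ θ in θ0..(1/2:ℝ), max 0 (Real.arsinh (mmBf k (Real.cos (2 * π * θ))))) :=
    (intervalIntegral.integral_add_adjacent_intervals (hint 0 θ0) (hint θ0 (1/2))).symm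
  have zero2 : (∫ θ in θ0..(1/2:ℝ), max 0 (Real.arsinh (mmBf k (Real.cos (2 * π * θ))))) = 0 := by
    have heq : Set.EqOn (fun θ : ℝ => max 0 (Real.arsinh (mmBf k (Real.cos (2 * π * θ)))))
        (fun _ => (0:ℝ)) (Set.uIcc θ0 (1/2)) := by
      intro θ hθ
      rw [Set.uIcc_of_le hθ0lt.le] at hθ
      have h1 : Real.cos (2 * π * θ) ≤ t0 := by
        rw [← hcosα]
        apply Real.cos_le_cos_of_nonneg_of_le_pi hα0.le
        · nlinarith [hθ.2]
        · nlinarith [hθ.1, h2πθ0]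
      have h2 : Real.arsinh (mmBf k (Real.cos (2 * π * θ))) ≤ 0 :=
        Real.arsinh_nonpos_iff.2 (hBf_nonpos _ h1)
      exact max_eq_left h2
    rw [intervalIntegral.integral_congr heq, intervalIntegral.integral_zero]
  have left2 : (∫ θ in (0:ℝ)..θ0, max 0 (Real.arsinh (mmBf k (Real.cos (2 * π * θ))))) =
      ∫ θ in (0:ℝ)..θ0, Real.arsinh (mmBf k (Real.cos (2 * π * θ))) := by
    apply intervalIntegral.integral_congr
    intro θ hθ
    rw [Set.uIcc_of_le hθ0pos.le] at hθ
    have h1 : t0 ≤ Real.cos (2 * π * θ) := by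
      rw [← hcosα]
      apply Real.cos_le_cos_of_nonneg_of_le_pi (by nlinarith [hθ.1]) hαπ
      nlinarith [hθ.2, h2πθ0]
    exact max_eq_right (Real.arsinh_nonneg_iff.2 (hBf_nonneg _ h1))
  have lhs_eq : mMinus k = 2 * ∫ θ in (0:ℝ)..θ0, Real.arsinh (mmBf k (Real.cos (2 * π * θ))) := by
    rw [step1, split1, sym1, split2, zero2, left2]; ring
  -- change of variables
  have hderiv : ∀ t ∈ Set.Ioo t0 1,
      HasDerivWithinAt (fun t => Real.arccos t / (2 * π))
        (-(1 / Real.sqrt (1 - t ^ 2)) / (2 * π)) (Set.Ioo t0 1) t := by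
    intro t ht
    exact ((Real.hasDerivAt_arccos (by linarith [ht.1]) (ne_of_lt ht.2)).div_const
      (2 * π)).hasDerivWithinAt
  have hinj : Set.InjOn (fun t => Real.arccos t / (2 * π)) (Set.Ioo t0 1) := by
    intro a ha b hb h
    simp only at h
    have h2 : Real.arccos a = Real.arccos b := by
      field_simp [Real.pi_ne_zero] at h; exact h
    exact Real.arccos_injOn ⟨by linarith [ha.1], ha.2.le⟩ ⟨by linarith [hb.1], hb.2.le⟩ h2
  have himg : (fun t => Real.arccos t / (2 * π)) '' Set.Ioo t0 1 = Set.Ioo 0 θ0 := by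
    ext θ
    simp only [Set.mem_image, Set.mem_Ioo]
    constructor
    · rintro ⟨t, ⟨ht1, ht2⟩, rfl⟩
      refine ⟨div_pos (Real.arccos_pos.2 ht2) (by positivity), ?_⟩
      have h3 : Real.arccos t < α := by
        rw [hα]
        exact Real.strictAntiOn_arccos ⟨by linarith, ht0lt.le⟩
          ⟨by linarith [ht1], ht2.le⟩ ht1
      rw [hθ0]
      gcongr
    · rintro ⟨hθ1, hθ2⟩
      have h2θ : 0 < 2 * π * θ := by positivity
      have h2θα : 2 * π * θ < α := by
        rw [hθ0, lt_div_iff₀ (by positivity : (0:ℝ) < 2 * π)] at hθ2; linarith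
      refine ⟨Real.cos (2 * π * θ), ⟨?_, ?_⟩, ?_⟩
      · rw [← hcosα]
        exact Real.strictAntiOn_cos ⟨h2θ.le, by linarith⟩ ⟨hα0.le, hαπ⟩ h2θα
      · have h4 := Real.strictAntiOn_cos (Set.left_mem_Icc.2 hpi.le)
          ⟨h2θ.le, by linarith⟩ h2θ
        simpa using h4
      · show Real.arccos (Real.cos (2 * π * θ)) / (2 * π) = θ
        rw [Real.arccos_cos h2θ.le (by linarith)]
        field_simp
  have hjac := MeasureTheory.integral_image_eq_integral_abs_deriv_smul measurableSet_Ioo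
    hderiv hinj (fun θ => 2 * π * Real.arsinh (mmBf k (Real.cos (2 * π * θ))))
  rw [himg] at hjac
  simp only [smul_eq_mul] at hjac
  have hIoo1 : (∫ θ in (0:ℝ)..θ0, 2 * π * Real.arsinh (mmBf k (Real.cos (2 * π * θ)))) =
      ∫ θ in Set.Ioo (0:ℝ) θ0, 2 * π * Real.arsinh (mmBf k (Real.cos (2 * π * θ))) := by
    rw [intervalIntegral.integral_of_le hθ0pos.le, MeasureTheory.integral_Ioc_eq_integral_Ioo]
  have hIoo2 : (∫ t in t0..(1:ℝ), Real.arsinh (mmBf k t) / Real.sqrt (1 - t ^ 2)) =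
      ∫ t in Set.Ioo t0 1, Real.arsinh (mmBf k t) / Real.sqrt (1 - t ^ 2) := by
    rw [intervalIntegral.integral_of_le ht0lt.le, MeasureTheory.integral_Ioc_eq_integral_Ioo]
  have hcongr : (∫ t in Set.Ioo t0 1,
        |(-(1 / Real.sqrt (1 - t ^ 2)) / (2 * π))| *
          (2 * π * Real.arsinh (mmBf k (Real.cos (2 * π * (Real.arccos t / (2 * π))))))) =
      ∫ t in Set.Ioo t0 1, Real.arsinh (mmBf k t) / Real.sqrt (1 - t ^ 2) := by
    apply MeasureTheory.setIntegral_congr_fun measurableSet_Ioo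
    intro t ht
    dsimp only
    have h1 : 0 < 1 - t ^ 2 := by nlinarith [ht.1, ht.2, ht0pos]
    have hs : 0 < Real.sqrt (1 - t ^ 2) := Real.sqrt_pos.2 h1
    have h2 : 2 * π * (Real.arccos t / (2 * π)) = Real.arccos t := by field_simp
    have h3 : |(-(1 / Real.sqrt (1 - t ^ 2)) / (2 * π))| =
        (1 / Real.sqrt (1 - t ^ 2)) / (2 * π) := by
      rw [neg_div, abs_neg, abs_of_nonneg (by positivity)]
    rw [h2, Real.cos_arccos (by linarith [ht.1, ht0pos]) ht.2.le, h3]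
    field_simp
  have hrhs_eq : (∫ t in t0..(1:ℝ),
      Real.log ((2 * t * Real.sqrt (k + 4) - k) / (2 * Real.sqrt (k - 4)) +
        Real.sqrt (((2 * t * Real.sqrt (k + 4) - k) / (2 * Real.sqrt (k - 4))) ^ 2 + 1)) /
      Real.sqrt (1 - t ^ 2)) =
      ∫ t in t0..(1:ℝ), Real.arsinh (mmBf k t) / Real.sqrt (1 - t ^ 2) := by
    apply intervalIntegral.integral_congr
    intro t _
    dsimp only
    unfold mmBf
    rw [← mm_log_add_sqrt]
  have hθint : (∫ θ in (0:ℝ)..θ0, 2 * π * Real.arsinh (mmBf k (Real.cos (2 * π * θ)))) =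
      2 * π * ∫ θ in (0:ℝ)..θ0, Real.arsinh (mmBf k (Real.cos (2 * π * θ))) :=
    intervalIntegral.integral_const_mul _ _
  rw [hrhs_eq, hIoo2, ← hcongr, ← hjac, ← hIoo1, hθint, lhs_eq]
  field_simp
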